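/- Suppose p_1,…,p_m ∈ [0,1] are independent random variables such that for each j in a set H_0 of null indices, P(p_j ≤ t) ≤ t for all t ∈ [0,1]. Let ŵ_i:[0,1]^m → (0,∞), i=1,…,m, be coordinate-wise nondecreasing functions with Σ_{i∈H_0} E[1/ŵ_i(p_{0,i})] ≤ m, where p_{0,i} replaces p_i by 0. Let U*: [0,1]^m → 2^{{1,…,m}} be a multiple testing procedure such that (a) p_i ≤ q·|U*(p)|/(m·ŵ_i(p)) for all i ∈ U*(p) (self-consistency), and (b) the map p ↦ |U*(p)| is coordinate-wise nonincreasing. Then the false discovery rate E[ |U*(p) ∩ H_0| / max(|U*(p)|,1) ] ≤ q. -/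

import Mathlib

open MeasureTheory ProbabilityTheory Finset
open scoped Classical ENNReal NNReal

section MonoAux

lemma ereal_iSup_rat_lt (a : EReal) :
    (⨆ q : ℚ, if ((q : ℝ) : EReal) < a then ((q : ℝ) : EReal) else ⊥) = a := by
  apply le_antisymm
  · exact iSup_le fun q => by split_ifs with h; exacts [h.le, bot_le]
  · refine le_of_forall_lt_imp_le_of_dense fun b hb => ?_
    obtain ⟨x, hbx, hxa⟩ := EReal.exists_rat_btwn_of_lt hb
    refine le_trans hbx.le (le_trans (le_of_eq (if_pos hxa).symm) (le_iSup
      (fun q : ℚ => if ((q : ℝ) : EReal) < a then ((q : ℝ) : EReal) else ⊥) x))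

lemma aemeasurable_of_nullMeasurable_ratLevels {X : Type*} [MeasurableSpace X] {π : Measure X}
    {f : X → EReal} (h : ∀ q : ℚ, NullMeasurableSet {x | ((q : ℝ) : EReal) < f x} π) :
    AEMeasurable f π := by
  choose B hBsub hBmeas hBae using fun q => (h q).exists_measurable_superset_ae_eq
  refine ⟨fun x => ⨆ q : ℚ, if x ∈ B q then ((q : ℝ) : EReal) else ⊥, ?_, ?_⟩
  · exact Measurable.iSup fun q => Measurable.ite (hBmeas q) measurable_const measurable_const
  · have hae : ∀ᵐ x ∂π, ∀ q : ℚ, (x ∈ B q ↔ ((q : ℝ) : EReal) < f x) := by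
      rw [MeasureTheory.ae_all_iff]
      intro q
      exact Filter.eventuallyEq_set.mp (hBae q)
    filter_upwards [hae] with x hx
    have hcongr : ∀ q : ℚ, (if x ∈ B q then ((q : ℝ) : EReal) else ⊥)
        = (if ((q : ℝ) : EReal) < f x then ((q : ℝ) : EReal) else ⊥) := by
      intro q
      by_cases hq : x ∈ B q
      · rw [if_pos hq, if_pos ((hx q).mp hq)]
      · rw [if_neg hq, if_neg (fun hc => hq ((hx q).mpr hc))]
    rw [show f x = ((⨆ q : ℚ, if ((q : ℝ) : EReal) < f x then ((q : ℝ) : EReal) else ⊥)) from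
      (ereal_iSup_rat_lt (f x)).symm]
    exact iSup_congr fun q => (hcongr q).symm

lemma countable_atoms (μ0 : Measure ℝ) [IsFiniteMeasure μ0] :
    Set.Countable {a : ℝ | μ0 {a} ≠ 0} := by
  have h := MeasureTheory.Measure.countable_meas_pos_of_disjoint_of_meas_iUnion_ne_top
    (μ := μ0) (As := fun a : ℝ => {a}) (fun a => measurableSet_singleton a)
    (fun a b hab => by simp [Function.onFun, hab])
    (by exact (lt_of_le_of_lt (measure_mono (Set.subset_univ _)) (measure_lt_top μ0 _)).ne)
  refine h.mono ?_
  intro a ha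
  simp only [Set.mem_setOf_eq] at ha ⊢
  exact pos_iff_ne_zero.mpr ha

lemma ae_eq_of_subset_null {α : Type*} [MeasurableSpace α] {μ : Measure α} {s tt W : Set α}
    (hsub : {z | ¬ (z ∈ s ↔ z ∈ tt)} ⊆ W) (hW : μ W = 0) : s =ᵐ[μ] tt :=
  Filter.eventuallyEq_set.mpr (ae_iff.mpr (measure_mono_null hsub hW))

lemma aemeasurable_antitone_of_upper {X : Type*} [MeasurableSpace X] [Preorder X] {π : Measure X}
    (hup : ∀ S : Set X, IsUpperSet S → NullMeasurableSet S π)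
    {f : X → EReal} (hf : Antitone f) : AEMeasurable f π := by
  refine aemeasurable_of_nullMeasurable_ratLevels fun q => ?_
  have h1 : IsUpperSet {x : X | ¬ ((q : ℝ) : EReal) < f x} := by
    intro a b hab ha hc
    exact ha (lt_of_lt_of_le hc (hf hab))
  have h2 := (hup _ h1).compl
  rw [Set.compl_setOf] at h2
  simpa only [not_not] using h2

lemma aemeasurable_monotone_of_upper {X : Type*} [MeasurableSpace X] [Preorder X] {π : Measure X}
    (hup : ∀ S : Set X, IsUpperSet S → NullMeasurableSet S π)
    {f : X → EReal} (hf : Monotone f) : AEMeasurable f π :=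
  aemeasurable_of_nullMeasurable_ratLevels fun _ =>
    hup _ (fun _ _ hab ha => lt_of_lt_of_le ha (hf hab))

theorem isUpperSet_nullMeasurableSet :
    ∀ (n : ℕ) (ν : Fin n → Measure ℝ), (∀ i, IsFiniteMeasure (ν i)) →
      ∀ U : Set (Fin n → ℝ), IsUpperSet U → NullMeasurableSet U (Measure.pi ν) := by
  intro n
  induction n with
  | zero =>
    intro ν _ U _
    exact Subsingleton.measurableSet.nullMeasurableSet
  | succ n IH =>
    intro ν hfin U hU
    haveI : ∀ i, IsFiniteMeasure (ν i) := hfin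
    set νt : Fin n → Measure ℝ := fun j => ν (Fin.succAbove 0 j) with hνt
    haveI hfin' : ∀ j, IsFiniteMeasure (νt j) := fun j => hfin _
    set μ0 : Measure ℝ := ν 0 with hμ0
    set π : Measure (Fin n → ℝ) := Measure.pi νt with hπ
    set e := MeasurableEquiv.piFinSuccAbove (fun _ : Fin (n + 1) => ℝ) 0 with he
    have mp : MeasurePreserving e (Measure.pi ν) (μ0.prod π) :=
      measurePreserving_piFinSuccAbove ν 0
    set Uh : Set (ℝ × (Fin n → ℝ)) := e.symm ⁻¹' U with hUhdef
    have hmem : ∀ (x : ℝ) (y : Fin n → ℝ), ((x, y) ∈ Uh ↔ Fin.insertNth 0 x y ∈ U) := by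
      intro x y
      rfl
    have hins_mono : ∀ {x x' : ℝ} {y y' : Fin n → ℝ}, x ≤ x' → y ≤ y' →
        Fin.insertNth (α := fun _ => ℝ) 0 x y ≤ Fin.insertNth (α := fun _ => ℝ) 0 x' y' := by
      intro x x' y y' hx hy
      intro k
      rcases eq_or_ne k 0 with rfl | hk
      · simpa only [Fin.insertNth_apply_same] using hx
      · obtain ⟨j, rfl⟩ := Fin.exists_succAbove_eq hk
        simpa only [Fin.insertNth_apply_succAbove] using hy j
    have hUhUp : ∀ {x x' : ℝ} {y y' : Fin n → ℝ}, x ≤ x' → y ≤ y' →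
        (x, y) ∈ Uh → (x', y') ∈ Uh := by
      intro x x' y y' hx hy hmemxy
      rw [hmem] at hmemxy ⊢
      exact hU (hins_mono hx hy) hmemxy
    set t : (Fin n → ℝ) → EReal :=
      fun y => sInf ((fun s : ℝ => (s : EReal)) '' {s | (s, y) ∈ Uh}) with htdef
    have ht_anti : Antitone t := by
      intro y y' hyy'
      apply sInf_le_sInf
      exact Set.image_mono (fun s hs => hUhUp le_rfl hyy' hs)
    have ht_le : ∀ {x : ℝ} {y}, (x, y) ∈ Uh → t y ≤ (x : EReal) := by
      intro x y h
      exact sInf_le ⟨x, h, rfl⟩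
    have ht_lt : ∀ {x : ℝ} {y}, t y < (x : EReal) → (x, y) ∈ Uh := by
      intro x y h
      obtain ⟨z, ⟨s, hs, rfl⟩, hzx⟩ := sInf_lt_iff.mp h
      have hzx' : ((s : ℝ) : EReal) < ((x : ℝ) : EReal) := hzx
      have hsx : s ≤ x := by exact_mod_cast hzx'.le
      exact hUhUp hsx le_rfl hs
    have htae : AEMeasurable t π :=
      aemeasurable_antitone_of_upper
        (fun S hS => IH νt hfin' S hS) ht_anti
    set τ := htae.mk t with hτdef
    have hτ : Measurable τ := htae.measurable_mk
    have htτ : t =ᵐ[π] τ := htae.ae_eq_mk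
    set N := toMeasurable π {y | ¬ t y = τ y} with hNdef
    have hNmeas : MeasurableSet N := measurableSet_toMeasurable _ _
    have hNnull : π N = 0 := by
      rw [hNdef, measure_toMeasurable]
      exact ae_iff.mp htτ
    have hNsub : {y | ¬ t y = τ y} ⊆ N := subset_toMeasurable _ _
    have hprodNnull : (μ0.prod π) (Set.univ ×ˢ N) = 0 := by
      rw [Measure.prod_prod, hNnull, mul_zero]
    set At : Set ℝ := {a | μ0 {a} ≠ 0} with hAtdef
    have hAtc : At.Countable := countable_atoms μ0
    set A : Set (ℝ × (Fin n → ℝ)) := {z | t z.2 < (z.1 : EReal)} with hAdef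
    set D1 : Set (ℝ × (Fin n → ℝ)) :=
      ⋃ a ∈ At, ({a} : Set ℝ) ×ˢ ({y | (a, y) ∈ Uh} ∩ {y | t y = (a : EReal)}) with hD1def
    set D2 : Set (ℝ × (Fin n → ℝ)) :=
      Uh ∩ {z | t z.2 = (z.1 : EReal) ∧ z.1 ∉ At} with hD2def
    have hdecomp : Uh = A ∪ (D1 ∪ D2) := by
      apply Set.Subset.antisymm
      · rintro ⟨x, y⟩ hz
        rcases lt_or_eq_of_le (ht_le hz) with hlt | heq
        · exact Or.inl hlt
        · by_cases hxAt : x ∈ At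
          · exact Or.inr (Or.inl (Set.mem_biUnion hxAt ⟨rfl, hz, heq⟩))
          · exact Or.inr (Or.inr ⟨hz, heq, hxAt⟩)
      · rintro ⟨x, y⟩ (hz | hz | hz)
        · exact ht_lt hz
        · obtain ⟨a, haAt, hza⟩ := Set.mem_iUnion₂.mp hz
          obtain ⟨hx1, hy2, _⟩ := hza
          have hxa : x = a := hx1
          rw [hxa]
          exact hy2
        · exact hz.1
    have hAnm : NullMeasurableSet A (μ0.prod π) := by
      refine ⟨{z : ℝ × (Fin n → ℝ) | τ z.2 < (z.1 : EReal)},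
        measurableSet_lt (hτ.comp measurable_snd)
          (measurable_coe_real_ereal.comp measurable_fst), ?_⟩
      refine ae_eq_of_subset_null (W := Set.univ ×ˢ N) ?_ hprodNnull
      rintro ⟨x, y⟩ hz
      refine ⟨trivial, hNsub ?_⟩
      intro heq
      apply hz
      constructor
      · intro h1; rw [hAdef] at h1; simpa [← heq] using h1
      · intro h1
        rw [hAdef]
        simp only [Set.mem_setOf_eq] at h1 ⊢
        rw [heq]
        exact h1
    set M : Set (ℝ × (Fin n → ℝ)) := {z : ℝ × (Fin n → ℝ) | τ z.2 = (z.1 : EReal) ∧ z.1 ∉ At}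
      with hMdef
    have hMnull : (μ0.prod π) M = 0 := by
      have hMmeas : MeasurableSet M := by
        refine MeasurableSet.inter ?_ ?_
        · have heqset : {z : ℝ × (Fin n → ℝ) | τ z.2 = (z.1 : EReal)}
              = {z : ℝ × (Fin n → ℝ) | τ z.2 ≤ (z.1 : EReal)}
                ∩ {z : ℝ × (Fin n → ℝ) | (z.1 : EReal) ≤ τ z.2} := by
            ext z
            simp [le_antisymm_iff]
          show MeasurableSet {z : ℝ × (Fin n → ℝ) | τ z.2 = (z.1 : EReal)}
          rw [heqset]
          exact (measurableSet_le (hτ.comp measurable_snd)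
              (measurable_coe_real_ereal.comp measurable_fst)).inter
            (measurableSet_le (measurable_coe_real_ereal.comp measurable_fst)
              (hτ.comp measurable_snd))
        · exact (hAtc.measurableSet.compl).preimage measurable_fst
      rw [Measure.prod_apply_symm hMmeas]
      have hzero : ∀ y : Fin n → ℝ,
          μ0 ((fun x : ℝ => (x, y)) ⁻¹' M) = 0 := by
        intro y
        have hset : ((fun x : ℝ => (x, y)) ⁻¹' M)
            = {x : ℝ | τ y = (x : EReal) ∧ x ∉ At} := rfl
        rw [hset]
        rcases Set.eq_empty_or_nonempty {x : ℝ | τ y = (x : EReal) ∧ x ∉ At} with hemp | ⟨x0, hx0⟩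
        · rw [hemp]; exact measure_empty
        · have hsub1 : {x : ℝ | τ y = (x : EReal) ∧ x ∉ At} ⊆ {x0} := by
            intro x hx
            have : (x : EReal) = (x0 : EReal) := hx.1.symm.trans hx0.1
            simpa using EReal.coe_eq_coe_iff.mp this
          refine measure_mono_null hsub1 ?_
          exact not_not.mp hx0.2
      exact (lintegral_congr hzero).trans lintegral_zero
    have hD2null : (μ0.prod π) D2 = 0 := by
      refine measure_mono_null ?_ (measure_union_null hMnull hprodNnull)
      rintro ⟨x, y⟩ ⟨hmemU, heq, hxAt⟩
      by_cases hyN : y ∈ N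
      · exact Or.inr ⟨trivial, hyN⟩
      · refine Or.inl ⟨?_, hxAt⟩
        have hty : t y = τ y := not_not.mp (fun hc => hyN (hNsub hc))
        rw [← hty]
        exact heq
    have hD1nm : NullMeasurableSet D1 (μ0.prod π) := by
      refine NullMeasurableSet.biUnion hAtc ?_
      intro a _
      set Ea : Set (Fin n → ℝ) := {y | (a, y) ∈ Uh} with hEadef
      set Fa : Set (Fin n → ℝ) := {y | t y = (a : EReal)} with hFadef
      have hEa : NullMeasurableSet Ea π :=
        IH νt hfin' _ (fun y y' hyy' hy => hUhUp le_rfl hyy' hy)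
      have hFa : NullMeasurableSet Fa π := by
        refine ⟨τ ⁻¹' {(a : EReal)}, hτ (measurableSet_singleton _), ?_⟩
        refine ae_eq_of_subset_null (W := N) ?_ hNnull
        intro y hy
        refine hNsub ?_
        intro hty
        apply hy
        simp only [hFadef, Set.mem_setOf_eq, Set.mem_preimage, Set.mem_singleton_iff, hty]
      have hS := hEa.inter hFa
      obtain ⟨B, hSB, hBm, hBS⟩ := hS.exists_measurable_superset_ae_eq
      refine ⟨({a} : Set ℝ) ×ˢ B, (measurableSet_singleton a).prod hBm, ?_⟩
      set W0 : Set (Fin n → ℝ) := {y | ¬ (y ∈ Ea ∩ Fa ↔ y ∈ B)} with hW0def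
      have hW0null : π W0 = 0 := by
        have h1 := ae_iff.mp (Filter.eventuallyEq_set.mp hBS.symm)
        exact h1
      refine ae_eq_of_subset_null (W := Set.univ ×ˢ toMeasurable π W0) ?_ ?_
      · rintro ⟨x, y⟩ hz
        refine ⟨trivial, subset_toMeasurable _ _ ?_⟩
        intro hiff
        apply hz
        constructor
        · rintro ⟨hx1, hy2⟩
          exact ⟨hx1, hiff.mp hy2⟩
        · rintro ⟨hx1, hy2⟩
          exact ⟨hx1, hiff.mpr hy2⟩
      · rw [Measure.prod_prod, measure_toMeasurable, hW0null, mul_zero]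
    have hUhnm : NullMeasurableSet Uh (μ0.prod π) := by
      rw [hdecomp]
      exact hAnm.union (hD1nm.union (NullMeasurableSet.of_null hD2null))
    have hUeq : U = e ⁻¹' Uh := by
      rw [hUhdef]
      ext v
      simp
    rw [hUeq]
    exact hUhnm.preimage mp.quasiMeasurePreserving

end MonoAux

lemma antitone_aemeasurable {n : ℕ} (ν : Fin n → Measure ℝ) (hfin : ∀ i, IsFiniteMeasure (ν i))
    {f : (Fin n → ℝ) → ℝ} (hf : Antitone f) : AEMeasurable f (Measure.pi ν) := by
  have h : AEMeasurable (fun v => ((f v : ℝ) : EReal)) (Measure.pi ν) :=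
    aemeasurable_antitone_of_upper (isUpperSet_nullMeasurableSet n ν hfin)
      (fun a b hab => EReal.coe_le_coe_iff.mpr (hf hab))
  have h2 : AEMeasurable (fun v => EReal.toReal ((f v : ℝ) : EReal)) (Measure.pi ν) :=
    measurable_ereal_toReal.comp_aemeasurable h
  simpa using h2

lemma monotone_aemeasurable {n : ℕ} (ν : Fin n → Measure ℝ) (hfin : ∀ i, IsFiniteMeasure (ν i))
    {f : (Fin n → ℝ) → ℝ} (hf : Monotone f) : AEMeasurable f (Measure.pi ν) := by
  have h : AEMeasurable (fun v => ((f v : ℝ) : EReal)) (Measure.pi ν) :=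
    aemeasurable_monotone_of_upper (isUpperSet_nullMeasurableSet n ν hfin)
      (fun a b hab => EReal.coe_le_coe_iff.mpr (hf hab))
  have h2 : AEMeasurable (fun v => EReal.toReal ((f v : ℝ) : EReal)) (Measure.pi ν) :=
    measurable_ereal_toReal.comp_aemeasurable h
  simpa using h2


section FDRAux

variable {m : ℕ}

noncomputable def cW (q : ℝ) (what : Fin m → (Fin m → ℝ) → ℝ) (j : Fin m)
    (v : Fin m → ℝ) : ℝ :=
  q / ((m : ℝ) * what j (Function.update v j 0))

noncomputable def gW (Ustar : (Fin m → ℝ) → Finset (Fin m)) (j : Fin m)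
    (v : Fin m → ℝ) (u : ℝ) : ℝ :=
  ((Ustar (Function.update v j u)).card : ℝ)

def AW (q : ℝ) (what : Fin m → (Fin m → ℝ) → ℝ) (Ustar : (Fin m → ℝ) → Finset (Fin m))
    (j : Fin m) (v : Fin m → ℝ) : Set ℝ :=
  {u | u ∈ Set.Icc (0:ℝ) 1 ∧ u ≤ cW q what j v * gW Ustar j v u}

noncomputable def TW (q : ℝ) (what : Fin m → (Fin m → ℝ) → ℝ)
    (Ustar : (Fin m → ℝ) → Finset (Fin m)) (j : Fin m) (v : Fin m → ℝ) : ℝ :=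
  sSup (AW q what Ustar j v)

noncomputable def gamW (q : ℝ) (what : Fin m → (Fin m → ℝ) → ℝ)
    (Ustar : (Fin m → ℝ) → Finset (Fin m)) (j : Fin m) (v : Fin m → ℝ) : ℝ :=
  if TW q what Ustar j v = 0 then (if v j ≤ 0 then 1 else 0)
  else (if v j ≤ TW q what Ustar j v then cW q what j v / TW q what Ustar j v else 0)

variable {q : ℝ} {what : Fin m → (Fin m → ℝ) → ℝ} {Ustar : (Fin m → ℝ) → Finset (Fin m)}

lemma update_le_self {v : Fin m → ℝ} {j : Fin m} (h : 0 ≤ v j) :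
    Function.update v j 0 ≤ v := by
  intro k
  rcases eq_or_ne k j with rfl | hk
  · simpa [Function.update_self] using h
  · simp [Function.update_of_ne hk]

lemma update_mono {v v' : Fin m → ℝ} {j : Fin m} (h : v ≤ v') (a : ℝ) :
    Function.update v j a ≤ Function.update v' j a := by
  intro k
  rcases eq_or_ne k j with rfl | hk
  · simp [Function.update_self]
  · simpa [Function.update_of_ne hk] using h k

lemma cW_pos (hq : 0 < q) (hm : 0 < m) (hw_pos : ∀ i v, 0 < what i v) (j : Fin m)
    (v : Fin m → ℝ) : 0 < cW q what j v := by
  apply div_pos hq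
  exact mul_pos (by exact_mod_cast hm) (hw_pos _ _)

lemma cW_anti (hq : 0 < q) (hm : 0 < m) (hw_pos : ∀ i v, 0 < what i v)
    (hw_mono : ∀ i, Monotone (what i)) (j : Fin m) : Antitone (cW q what j) := by
  intro v v' hvv'
  unfold cW
  have h1 : (0:ℝ) < (m : ℝ) * what j (Function.update v j 0) :=
    mul_pos (by exact_mod_cast hm) (hw_pos _ _)
  have h2 : (m:ℝ) * what j (Function.update v j 0) ≤ (m:ℝ) * what j (Function.update v' j 0) :=
    mul_le_mul_of_nonneg_left (hw_mono j (update_mono hvv' 0)) (by positivity)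
  exact div_le_div_of_nonneg_left hq.le h1 h2

lemma gW_nonneg (j : Fin m) (v : Fin m → ℝ) (u : ℝ) : 0 ≤ gW Ustar j v u := by
  unfold gW; positivity

lemma gW_anti_u (hUanti : ∀ v₁ v₂ : Fin m → ℝ, v₁ ≤ v₂ → (Ustar v₂).card ≤ (Ustar v₁).card)
    (j : Fin m) (v : Fin m → ℝ) : Antitone (gW Ustar j v) := by
  intro u u' huu'
  unfold gW
  have hle : Function.update v j u ≤ Function.update v j u' := by
    intro k
    rcases eq_or_ne k j with rfl | hk
    · simpa [Function.update_self] using huu'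
    · simp [Function.update_of_ne hk]
  exact_mod_cast hUanti _ _ hle

lemma gW_anti_v (hUanti : ∀ v₁ v₂ : Fin m → ℝ, v₁ ≤ v₂ → (Ustar v₂).card ≤ (Ustar v₁).card)
    (j : Fin m) (u : ℝ) {v v' : Fin m → ℝ} (h : v ≤ v') : gW Ustar j v' u ≤ gW Ustar j v u := by
  unfold gW
  exact_mod_cast hUanti _ _ (update_mono h u)

lemma AW_anti (hq : 0 < q) (hm : 0 < m) (hw_pos : ∀ i v, 0 < what i v)
    (hw_mono : ∀ i, Monotone (what i))
    (hUanti : ∀ v₁ v₂ : Fin m → ℝ, v₁ ≤ v₂ → (Ustar v₂).card ≤ (Ustar v₁).card)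
    (j : Fin m) {v v' : Fin m → ℝ} (h : v ≤ v') : AW q what Ustar j v' ⊆ AW q what Ustar j v := by
  intro u hu
  refine ⟨hu.1, le_trans hu.2 ?_⟩
  exact mul_le_mul (cW_anti hq hm hw_pos hw_mono j h) (gW_anti_v hUanti j u h)
    (gW_nonneg j v' u) (cW_pos hq hm hw_pos j v).le

lemma AW_bddAbove (j : Fin m) (v : Fin m → ℝ) : BddAbove (AW q what Ustar j v) :=
  ⟨1, fun _ hx => hx.1.2⟩

lemma TW_nonneg (j : Fin m) (v : Fin m → ℝ) : 0 ≤ TW q what Ustar j v := by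
  rcases Set.eq_empty_or_nonempty (AW q what Ustar j v) with he | ⟨u, hu⟩
  · unfold TW; rw [he, Real.sSup_empty]
  · exact le_trans hu.1.1 (le_csSup (AW_bddAbove j v) hu)

lemma TW_le_one (j : Fin m) (v : Fin m → ℝ) : TW q what Ustar j v ≤ 1 := by
  rcases Set.eq_empty_or_nonempty (AW q what Ustar j v) with he | hne
  · unfold TW; rw [he, Real.sSup_empty]; exact zero_le_one
  · exact csSup_le hne (fun x hx => hx.1.2)

lemma TW_anti (hq : 0 < q) (hm : 0 < m) (hw_pos : ∀ i v, 0 < what i v)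
    (hw_mono : ∀ i, Monotone (what i))
    (hUanti : ∀ v₁ v₂ : Fin m → ℝ, v₁ ≤ v₂ → (Ustar v₂).card ≤ (Ustar v₁).card)
    (j : Fin m) : Antitone (TW q what Ustar j) := by
  intro v v' hvv'
  rcases Set.eq_empty_or_nonempty (AW q what Ustar j v') with he | hne
  · unfold TW; rw [he, Real.sSup_empty]; exact TW_nonneg j v
  · exact csSup_le_csSup (AW_bddAbove j v) hne (AW_anti hq hm hw_pos hw_mono hUanti j hvv')

lemma TW_le_mul (hq : 0 < q) (hm : 0 < m) (hw_pos : ∀ i v, 0 < what i v)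
    (hUanti : ∀ v₁ v₂ : Fin m → ℝ, v₁ ≤ v₂ → (Ustar v₂).card ≤ (Ustar v₁).card)
    (j : Fin m) (v : Fin m → ℝ) {u : ℝ} (hu : u ∈ AW q what Ustar j v) :
    TW q what Ustar j v ≤ cW q what j v * max (gW Ustar j v u) 1 := by
  have hcpos := cW_pos hq hm hw_pos j v
  apply csSup_le ⟨u, hu⟩
  intro u' hu'
  rcases le_total u' u with h | h
  · exact le_trans h (le_trans hu.2
      (mul_le_mul_of_nonneg_left (le_max_left _ _) hcpos.le))
  · refine le_trans hu'.2 (mul_le_mul_of_nonneg_left ?_ hcpos.le)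
    exact le_trans (gW_anti_u hUanti j v h) (le_max_left _ _)

lemma cW_update (j : Fin m) (v : Fin m → ℝ) (a : ℝ) :
    cW q what j (Function.update v j a) = cW q what j v := by
  unfold cW
  rw [Function.update_idem]

lemma gW_update (j : Fin m) (v : Fin m → ℝ) (a u : ℝ) :
    gW Ustar j (Function.update v j a) u = gW Ustar j v u := by
  unfold gW
  rw [Function.update_idem]

lemma AW_update (j : Fin m) (v : Fin m → ℝ) (a : ℝ) :
    AW q what Ustar j (Function.update v j a) = AW q what Ustar j v := by
  unfold AW
  ext u
  simp only [Set.mem_setOf_eq, cW_update, gW_update]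

lemma TW_update (j : Fin m) (v : Fin m → ℝ) (a : ℝ) :
    TW q what Ustar j (Function.update v j a) = TW q what Ustar j v := by
  unfold TW
  rw [AW_update]

lemma gamW_nonneg (hq : 0 < q) (hm : 0 < m) (hw_pos : ∀ i v, 0 < what i v)
    (j : Fin m) (v : Fin m → ℝ) : 0 ≤ gamW q what Ustar j v := by
  unfold gamW
  split_ifs with h1 h2 h3
  · exact zero_le_one
  · exact le_refl 0
  · exact div_nonneg (cW_pos hq hm hw_pos j v).le (TW_nonneg j v)
  · exact le_refl 0

lemma gamW_pointwise (hq : 0 < q) (hm : 0 < m) (hw_pos : ∀ i v, 0 < what i v)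
    (hw_mono : ∀ i, Monotone (what i))
    (hUanti : ∀ v₁ v₂ : Fin m → ℝ, v₁ ≤ v₂ → (Ustar v₂).card ≤ (Ustar v₁).card)
    (hSC : ∀ v : Fin m → ℝ, ∀ i ∈ Ustar v,
      v i ≤ q * ((Ustar v).card : ℝ) / ((m : ℝ) * what i v))
    (H0 : Finset (Fin m)) (v : Fin m → ℝ) (hv : ∀ i, v i ∈ Set.Icc (0:ℝ) 1) :
    ((Ustar v ∩ H0).card : ℝ) / max ((Ustar v).card : ℝ) 1 ≤ ∑ j ∈ H0, gamW q what Ustar j v := by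
  have hDpos : (0:ℝ) < max ((Ustar v).card : ℝ) 1 :=
    lt_of_lt_of_le zero_lt_one (le_max_right _ _)
  have hrw : ((Ustar v ∩ H0).card : ℝ) / max ((Ustar v).card : ℝ) 1
      = ∑ j ∈ H0, (if j ∈ Ustar v then (1:ℝ) else 0) / max ((Ustar v).card : ℝ) 1 := by
    rw [← Finset.sum_div]
    congr 1
    rw [Finset.sum_boole]
    congr 1
    rw [Finset.filter_mem_eq_inter, Finset.inter_comm]
  rw [hrw]
  refine Finset.sum_le_sum ?_
  intro j hj
  by_cases hjU : j ∈ Ustar v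
  · -- main case
    have hcard1 : (1:ℝ) ≤ ((Ustar v).card : ℝ) := by
      exact_mod_cast Finset.card_pos.mpr ⟨j, hjU⟩
    have hgv : gW Ustar j v (v j) = ((Ustar v).card : ℝ) := by
      unfold gW
      rw [Function.update_eq_self]
    have hwle : what j (Function.update v j 0) ≤ what j v :=
      hw_mono j (update_le_self (hv j).1)
    have hmwpos : (0:ℝ) < (m:ℝ) * what j (Function.update v j 0) :=
      mul_pos (by exact_mod_cast hm) (hw_pos _ _)
    have hvj_mem : v j ∈ AW q what Ustar j v := by
      refine ⟨hv j, ?_⟩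
      rw [hgv]
      calc v j ≤ q * ((Ustar v).card : ℝ) / ((m : ℝ) * what j v) := hSC v j hjU
        _ ≤ q * ((Ustar v).card : ℝ) / ((m : ℝ) * what j (Function.update v j 0)) := by
            apply div_le_div_of_nonneg_left (by positivity) hmwpos
            exact mul_le_mul_of_nonneg_left hwle (by positivity)
        _ = cW q what j v * ((Ustar v).card : ℝ) := by
            unfold cW
            rw [div_mul_eq_mul_div]
    have hvjT : v j ≤ TW q what Ustar j v := le_csSup (AW_bddAbove j v) hvj_mem
    have hmaxg : max (gW Ustar j v (v j)) 1 = max ((Ustar v).card : ℝ) 1 := by rw [hgv]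
    rw [if_pos hjU]
    unfold gamW
    by_cases hT0 : TW q what Ustar j v = 0
    · rw [if_pos hT0, if_pos (le_trans hvjT (le_of_eq hT0))]
      exact div_le_one_of_le₀ (le_max_right _ _) hDpos.le
    · rw [if_neg hT0, if_pos hvjT]
      have hTpos : 0 < TW q what Ustar j v := lt_of_le_of_ne (TW_nonneg j v) (Ne.symm hT0)
      rw [div_le_div_iff₀ hDpos hTpos]
      calc 1 * TW q what Ustar j v = TW q what Ustar j v := one_mul _
        _ ≤ cW q what j v * max (gW Ustar j v (v j)) 1 :=
            TW_le_mul hq hm hw_pos hUanti j v hvj_mem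
        _ = cW q what j v * max ((Ustar v).card : ℝ) 1 := by rw [hmaxg]
  · rw [if_neg hjU]
    rw [zero_div]
    exact gamW_nonneg hq hm hw_pos j v

end FDRAux

section FDRKey

lemma gamW_aemeasurable {m : ℕ} (ν : Fin m → Measure ℝ) (hfin : ∀ i, IsFiniteMeasure (ν i))
    {q : ℝ} {what : Fin m → (Fin m → ℝ) → ℝ} {Ustar : (Fin m → ℝ) → Finset (Fin m)}
    (hq : 0 < q) (hm : 0 < m) (hw_pos : ∀ i v, 0 < what i v)
    (hw_mono : ∀ i, Monotone (what i))
    (hUanti : ∀ v₁ v₂ : Fin m → ℝ, v₁ ≤ v₂ → (Ustar v₂).card ≤ (Ustar v₁).card)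
    (j : Fin m) :
    AEMeasurable (fun v => ENNReal.ofReal (gamW q what Ustar j v)) (Measure.pi ν) := by
  have hT : AEMeasurable (TW q what Ustar j) (Measure.pi ν) :=
    antitone_aemeasurable ν hfin (TW_anti hq hm hw_pos hw_mono hUanti j)
  have hc : AEMeasurable (cW q what j) (Measure.pi ν) :=
    antitone_aemeasurable ν hfin (cW_anti hq hm hw_pos hw_mono j)
  have hmk : Measurable (fun v : Fin m → ℝ => ENNReal.ofReal
      (if hT.mk _ v = 0 then (if v j ≤ 0 then (1:ℝ) else 0)
       else (if v j ≤ hT.mk _ v then hc.mk _ v / hT.mk _ v else 0))) := by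
    apply ENNReal.measurable_ofReal.comp
    have hTm := hT.measurable_mk
    have hcm := hc.measurable_mk
    refine Measurable.ite (hTm (measurableSet_singleton 0)) ?_ ?_
    · exact Measurable.ite (measurableSet_le (measurable_pi_apply j) measurable_const)
        measurable_const measurable_const
    · exact Measurable.ite (measurableSet_le (measurable_pi_apply j) hTm)
        (hcm.div hTm) measurable_const
  refine ⟨_, hmk, ?_⟩
  filter_upwards [hT.ae_eq_mk, hc.ae_eq_mk] with v hTv hcv
  simp only [gamW, hTv, hcv]

lemma key_bound {n : ℕ} (ν : Fin (n + 1) → Measure ℝ)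
    (hprob : ∀ i, IsProbabilityMeasure (ν i))
    {q : ℝ} {what : Fin (n + 1) → (Fin (n + 1) → ℝ) → ℝ}
    {Ustar : (Fin (n + 1) → ℝ) → Finset (Fin (n + 1))}
    (hq : 0 < q) (hw_pos : ∀ i v, 0 < what i v)
    (hw_mono : ∀ i, Monotone (what i))
    (hUanti : ∀ v₁ v₂ : Fin (n + 1) → ℝ, v₁ ≤ v₂ → (Ustar v₂).card ≤ (Ustar v₁).card)
    (j : Fin (n + 1))
    (hnullj : ∀ t : ℝ, 0 ≤ t → t ≤ 1 → ν j (Set.Iic t) ≤ ENNReal.ofReal t)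
    (hbox : ∀ i, ν i (Set.Icc (0:ℝ) 1) = 1) :
    ∫⁻ v, ENNReal.ofReal (gamW q what Ustar j v) ∂(Measure.pi ν)
      ≤ ENNReal.ofReal (∫ v, cW q what j v ∂(Measure.pi ν)) := by
  haveI : ∀ i, IsFiniteMeasure (ν i) := fun i => inferInstance
  have hm : 0 < n + 1 := Nat.succ_pos n
  set e := MeasurableEquiv.piFinSuccAbove (fun _ : Fin (n + 1) => ℝ) j with he
  have mp : MeasurePreserving e (Measure.pi ν)
      ((ν j).prod (Measure.pi fun k => ν (j.succAbove k))) :=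
    measurePreserving_piFinSuccAbove ν j
  set π' : Measure (Fin n → ℝ) := Measure.pi fun k => ν (j.succAbove k) with hπ'
  haveI : ∀ k, IsProbabilityMeasure (ν (j.succAbove k)) := fun k => hprob _
  have mps : MeasurePreserving e.symm ((ν j).prod π') (Measure.pi ν) :=
    MeasurePreserving.symm e mp
  -- identification of e.symm
  have hesymm : ∀ z : ℝ × (Fin n → ℝ), e.symm z = Fin.insertNth j z.1 z.2 := fun z => rfl
  have hins_upd : ∀ (x : ℝ) (y : Fin n → ℝ),
      Fin.insertNth (α := fun _ => ℝ) j x y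
        = Function.update (Fin.insertNth (α := fun _ => ℝ) j 0 y) j x := by
    intro x y
    funext k
    rcases eq_or_ne k j with rfl | hk
    · simp [Fin.insertNth_apply_same, Function.update_self]
    · obtain ⟨l, rfl⟩ := Fin.exists_succAbove_eq hk
      rw [Fin.insertNth_apply_succAbove, Function.update_of_ne (Fin.succAbove_ne j l),
        Fin.insertNth_apply_succAbove]
  set Th : (Fin n → ℝ) → ℝ := fun y => TW q what Ustar j (Fin.insertNth j 0 y) with hTh
  set ch : (Fin n → ℝ) → ℝ := fun y => cW q what j (Fin.insertNth j 0 y) with hch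
  have hins_mono : ∀ {y y' : Fin n → ℝ}, y ≤ y' →
      Fin.insertNth (α := fun _ => ℝ) j 0 y ≤ Fin.insertNth (α := fun _ => ℝ) j 0 y' := by
    intro y y' hy k
    rcases eq_or_ne k j with rfl | hk
    · simp [Fin.insertNth_apply_same]
    · obtain ⟨l, rfl⟩ := Fin.exists_succAbove_eq hk
      simpa only [Fin.insertNth_apply_succAbove] using hy l
  have hch_anti : Antitone ch := fun y y' hy =>
    cW_anti hq hm hw_pos hw_mono j (hins_mono hy)
  have hch_aem : AEMeasurable ch π' :=
    antitone_aemeasurable _ (fun k => inferInstance) hch_anti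
  -- value identification
  have hGval : ∀ (x : ℝ) (y : Fin n → ℝ),
      gamW q what Ustar j (e.symm (x, y))
        = (if Th y = 0 then (if x ≤ 0 then (1:ℝ) else 0)
           else (if x ≤ Th y then ch y / Th y else 0)) := by
    intro x y
    rw [hesymm (x, y)]
    have h1 : TW q what Ustar j (Fin.insertNth j x y) = Th y := by
      rw [hins_upd x y, TW_update]
    have h2 : cW q what j (Fin.insertNth j x y) = ch y := by
      rw [hins_upd x y, cW_update]
    have h3 : (Fin.insertNth (α := fun _ => ℝ) j x y) j = x := Fin.insertNth_apply_same (α := fun _ => ℝ) j x y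
    simp only [gamW, h1, h2, h3]
  have hcval : ∀ z : ℝ × (Fin n → ℝ), cW q what j (e.symm z) = ch z.2 := by
    intro z
    rw [hesymm z, hins_upd z.1 z.2, cW_update]
  -- step 1: transfer to the product
  have step1 : ∫⁻ v, ENNReal.ofReal (gamW q what Ustar j v) ∂(Measure.pi ν)
      = ∫⁻ z : ℝ × (Fin n → ℝ), ENNReal.ofReal (gamW q what Ustar j (e.symm z))
          ∂((ν j).prod π') :=
    (mps.lintegral_comp_emb e.symm.measurableEmbedding _).symm
  have hgam_aem : AEMeasurable (fun v => ENNReal.ofReal (gamW q what Ustar j v))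
      (Measure.pi ν) := gamW_aemeasurable ν (fun i => inferInstance) hq hm hw_pos hw_mono hUanti j
  have hG_aem : AEMeasurable
      (fun z : ℝ × (Fin n → ℝ) => ENNReal.ofReal (gamW q what Ustar j (e.symm z)))
      ((ν j).prod π') :=
    hgam_aem.comp_quasiMeasurePreserving mps.quasiMeasurePreserving
  have step2 : ∫⁻ z : ℝ × (Fin n → ℝ), ENNReal.ofReal (gamW q what Ustar j (e.symm z))
      ∂((ν j).prod π')
      = ∫⁻ y, ∫⁻ x, ENNReal.ofReal (gamW q what Ustar j (e.symm (x, y))) ∂(ν j) ∂π' :=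
    lintegral_prod_symm _ hG_aem
  -- inner bound
  have hinner : ∀ y : Fin n → ℝ,
      (∫⁻ x, ENNReal.ofReal (gamW q what Ustar j (e.symm (x, y))) ∂(ν j))
        ≤ ENNReal.ofReal (ch y) := by
    intro y
    have hch_pos : 0 < ch y := cW_pos hq hm hw_pos j _
    have hTh01 : 0 ≤ Th y ∧ Th y ≤ 1 := ⟨TW_nonneg j _, TW_le_one j _⟩
    by_cases hT0 : Th y = 0
    · have heq : (fun x : ℝ => ENNReal.ofReal (gamW q what Ustar j (e.symm (x, y))))
          = (Set.Iic (0:ℝ)).indicator (fun _ => (1:ℝ≥0∞)) := by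
        funext x
        rw [hGval x y, if_pos hT0]
        by_cases hx : x ≤ 0
        · rw [if_pos hx, Set.indicator_of_mem (Set.mem_Iic.mpr hx)]
          simp
        · rw [if_neg hx, Set.indicator_of_notMem (fun hmem => hx (Set.mem_Iic.mp hmem))]
          simp
      rw [heq, lintegral_indicator measurableSet_Iic, setLIntegral_const, one_mul]
      have h0 : ν j (Set.Iic 0) = 0 := by simpa using hnullj 0 le_rfl zero_le_one
      rw [h0]
      exact zero_le
    · have hThpos : 0 < Th y := lt_of_le_of_ne hTh01.1 (Ne.symm hT0)
      have heq : (fun x : ℝ => ENNReal.ofReal (gamW q what Ustar j (e.symm (x, y))))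
          = (Set.Iic (Th y)).indicator (fun _ => ENNReal.ofReal (ch y / Th y)) := by
        funext x
        rw [hGval x y, if_neg hT0]
        by_cases hx : x ≤ Th y
        · rw [if_pos hx, Set.indicator_of_mem (Set.mem_Iic.mpr hx)]
        · rw [if_neg hx, Set.indicator_of_notMem (fun hmem => hx (Set.mem_Iic.mp hmem))]
          simp
      rw [heq, lintegral_indicator measurableSet_Iic, setLIntegral_const]
      calc ENNReal.ofReal (ch y / Th y) * ν j (Set.Iic (Th y))
          ≤ ENNReal.ofReal (ch y / Th y) * ENNReal.ofReal (Th y) :=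
            mul_le_mul_right (hnullj (Th y) hTh01.1 hTh01.2) _
        _ = ENNReal.ofReal (ch y / Th y * Th y) :=
            (ENNReal.ofReal_mul (by positivity)).symm
        _ = ENNReal.ofReal (ch y) := by
            rw [div_mul_cancel₀ _ (ne_of_gt hThpos)]
  have step3 : ∫⁻ y, ∫⁻ x, ENNReal.ofReal (gamW q what Ustar j (e.symm (x, y))) ∂(ν j) ∂π'
      ≤ ∫⁻ y, ENNReal.ofReal (ch y) ∂π' := lintegral_mono hinner
  -- identify RHS with integral over pi
  have hc_aem : AEMeasurable (cW q what j) (Measure.pi ν) :=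
    antitone_aemeasurable ν (fun i => inferInstance) (cW_anti hq hm hw_pos hw_mono j)
  have step4 : ∫⁻ y, ENNReal.ofReal (ch y) ∂π'
      = ∫⁻ v, ENNReal.ofReal (cW q what j v) ∂(Measure.pi ν) := by
    rw [← mps.lintegral_comp_emb e.symm.measurableEmbedding
      (fun v => ENNReal.ofReal (cW q what j v))]
    have hre : (fun z : ℝ × (Fin n → ℝ) => ENNReal.ofReal (cW q what j (e.symm z)))
        = fun z : ℝ × (Fin n → ℝ) => ENNReal.ofReal (ch z.2) := by
      funext z
      rw [hcval z]
    rw [hre]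
    have hAE2 : AEMeasurable (fun z : ℝ × (Fin n → ℝ) => ENNReal.ofReal (ch z.2))
        ((ν j).prod π') :=
      (ENNReal.measurable_ofReal.comp_aemeasurable hch_aem).comp_quasiMeasurePreserving
        Measure.quasiMeasurePreserving_snd
    rw [lintegral_prod_symm _ hAE2]
    refine (lintegral_congr fun y => ?_).symm
    have hrfl : ∫⁻ x, ENNReal.ofReal (ch (x, y).2) ∂(ν j)
        = ∫⁻ _, ENNReal.ofReal (ch y) ∂(ν j) := rfl
    rw [hrfl, lintegral_const, measure_univ, mul_one]
  -- Integrability of cW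
  have haebox : ∀ᵐ v ∂(Measure.pi ν), ∀ i, v i ∈ Set.Icc (0:ℝ) 1 := by
    have hmeasb : MeasurableSet (Set.pi Set.univ fun _ : Fin (n+1) => Set.Icc (0:ℝ) 1) :=
      MeasurableSet.univ_pi fun _ => measurableSet_Icc
    have h1 : Measure.pi ν (Set.pi Set.univ fun _ : Fin (n+1) => Set.Icc (0:ℝ) 1) = 1 := by
      rw [Measure.pi_pi]
      simp [hbox]
    have h0 : Measure.pi ν (Set.pi Set.univ fun _ : Fin (n+1) => Set.Icc (0:ℝ) 1)ᶜ = 0 := by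
      rw [measure_compl hmeasb (measure_ne_top _ _), h1]
      simp
    refine ae_iff.mpr (measure_mono_null ?_ h0)
    intro v hv
    simp only [Set.mem_compl_iff, Set.mem_pi, Set.mem_univ, forall_true_left] at hv ⊢
    intro hc
    exact hv (fun i => hc i)
  have hcbound : ∀ᵐ v ∂(Measure.pi ν), ‖cW q what j v‖ ≤ cW q what j (fun _ => 0) := by
    filter_upwards [haebox] with v hv
    rw [Real.norm_eq_abs, abs_of_pos (cW_pos hq hm hw_pos j v)]
    exact cW_anti hq hm hw_pos hw_mono j (fun i => (hv i).1)
  have hcint : Integrable (cW q what j) (Measure.pi ν) :=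
    Integrable.mono' (integrable_const _) hc_aem.aestronglyMeasurable hcbound
  have step5 : ∫⁻ v, ENNReal.ofReal (cW q what j v) ∂(Measure.pi ν)
      = ENNReal.ofReal (∫ v, cW q what j v ∂(Measure.pi ν)) :=
    (ofReal_integral_eq_lintegral_ofReal hcint
      (Filter.Eventually.of_forall fun v => (cW_pos hq hm hw_pos j v).le)).symm
  calc ∫⁻ v, ENNReal.ofReal (gamW q what Ustar j v) ∂(Measure.pi ν)
      = ∫⁻ y, ∫⁻ x, ENNReal.ofReal (gamW q what Ustar j (e.symm (x, y))) ∂(ν j) ∂π' := by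
        rw [step1, step2]
    _ ≤ ∫⁻ y, ENNReal.ofReal (ch y) ∂π' := step3
    _ = ENNReal.ofReal (∫ v, cW q what j v ∂(Measure.pi ν)) := by rw [step4, step5]

end FDRKey

/-- FDR control for self-consistent multiple testing procedures with data-adaptive
weights (Lemma B1): under independent superuniform null p-values, coordinate-wise
nondecreasing weight functions satisfying `Σ_{i∈H0} E[1/ŵ_i(p_{0,i})] ≤ m`,
self-consistency `p_i ≤ q|U*(p)|/(m ŵ_i(p))` for all `i ∈ U*(p)`, and
coordinate-wise nonincreasing `p ↦ |U*(p)|`, the FDR is at most `q`. -/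
theorem fdr_control_self_consistent
    {Ω : Type*} [MeasurableSpace Ω] (μ : Measure Ω) [IsProbabilityMeasure μ]
    (m : ℕ) (hm : 0 < m) (q : ℝ) (hq : 0 < q)
    (p : Fin m → Ω → ℝ) (hmeas : ∀ i, Measurable (p i))
    (hrange : ∀ i ω, p i ω ∈ Set.Icc (0:ℝ) 1)
    (hindep : iIndepFun p μ)
    (H0 : Finset (Fin m))
    (hnull : ∀ j ∈ H0, ∀ t ∈ Set.Icc (0:ℝ) 1, μ {ω | p j ω ≤ t} ≤ ENNReal.ofReal t)
    (what : Fin m → (Fin m → ℝ) → ℝ)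
    (hw_pos : ∀ i v, 0 < what i v)
    (hw_mono : ∀ i, Monotone (what i))
    (hw_cond : ∑ i ∈ H0,
        ∫ ω, (what i (Function.update (fun j => p j ω) i 0))⁻¹ ∂μ ≤ (m : ℝ))
    (Ustar : (Fin m → ℝ) → Finset (Fin m))
    (hSC : ∀ v : Fin m → ℝ, ∀ i ∈ Ustar v,
        v i ≤ q * ((Ustar v).card : ℝ) / ((m : ℝ) * what i v))
    (hUanti : ∀ v₁ v₂ : Fin m → ℝ, v₁ ≤ v₂ → (Ustar v₂).card ≤ (Ustar v₁).card) :
    ∫ ω, ((Ustar (fun j => p j ω) ∩ H0).card : ℝ)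
        / max ((Ustar (fun j => p j ω)).card : ℝ) 1 ∂μ ≤ q := by
  by_cases hInt : Integrable (fun ω => ((Ustar (fun j => p j ω) ∩ H0).card : ℝ)
      / max ((Ustar (fun j => p j ω)).card : ℝ) 1) μ
  swap
  · rw [integral_undef hInt]; exact hq.le
  obtain ⟨n, rfl⟩ : ∃ n, m = n + 1 := ⟨m - 1, (Nat.succ_pred_eq_of_pos hm).symm⟩
  have hm' : 0 < n + 1 := Nat.succ_pos n
  set P : Ω → (Fin (n + 1) → ℝ) := fun ω => fun j => p j ω with hPdef
  have hPmeas : Measurable P := measurable_pi_lambda _ (fun j => hmeas j)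
  set ν : Fin (n + 1) → Measure ℝ := fun i => μ.map (p i) with hνdef
  haveI hprob : ∀ i, IsProbabilityMeasure (ν i) := fun i =>
    Measure.isProbabilityMeasure_map (hmeas i).aemeasurable
  haveI hfin : ∀ i, IsFiniteMeasure (ν i) := fun i => inferInstance
  have hmap : Measure.pi ν = μ.map P := by
    refine Measure.pi_eq fun s hs => ?_
    rw [Measure.map_apply hPmeas (MeasurableSet.univ_pi hs)]
    have hpre : P ⁻¹' (Set.univ.pi s) = ⋂ i ∈ Finset.univ, p i ⁻¹' s i := by
      ext ω
      simp [hPdef, Set.mem_pi]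
    rw [hpre, hindep.measure_inter_preimage_eq_mul Finset.univ (fun i _ => hs i)]
    exact Finset.prod_congr rfl fun i _ => (Measure.map_apply (hmeas i) (hs i)).symm
  have hbox : ∀ i, ν i (Set.Icc (0:ℝ) 1) = 1 := by
    intro i
    rw [hνdef]
    rw [Measure.map_apply (hmeas i) measurableSet_Icc]
    have huniv : p i ⁻¹' Set.Icc 0 1 = Set.univ := Set.eq_univ_of_forall fun ω => hrange i ω
    rw [huniv, measure_univ]
  have hnullj : ∀ j ∈ H0, ∀ t : ℝ, 0 ≤ t → t ≤ 1 → ν j (Set.Iic t) ≤ ENNReal.ofReal t := by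
    intro j hj t h0 h1
    rw [hνdef, Measure.map_apply (hmeas j) measurableSet_Iic]
    exact hnull j hj t ⟨h0, h1⟩
  have hwinv_aesm : ∀ j : Fin (n + 1), AEStronglyMeasurable
      (fun v : Fin (n + 1) → ℝ => (what j (Function.update v j 0))⁻¹) (μ.map P) := by
    intro j
    rw [← hmap]
    have hmono : Monotone (fun v : Fin (n + 1) → ℝ => what j (Function.update v j 0)) :=
      fun a b hab => hw_mono j (update_mono hab 0)
    exact ((monotone_aemeasurable ν hfin hmono).inv).aestronglyMeasurable
  have hIeq : ∀ j : Fin (n + 1), (∫ v, (what j (Function.update v j 0))⁻¹ ∂(Measure.pi ν))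
      = ∫ ω, (what j (Function.update (fun k => p k ω) j 0))⁻¹ ∂μ := by
    intro j
    rw [hmap, integral_map hPmeas.aemeasurable (hwinv_aesm j)]
  have hcint_eq : ∀ j : Fin (n + 1), ∫ v, cW q what j v ∂(Measure.pi ν)
      = (q / ((n + 1 : ℕ) : ℝ)) * ∫ v, (what j (Function.update v j 0))⁻¹ ∂(Measure.pi ν) := by
    intro j
    have hval : ∀ v : Fin (n + 1) → ℝ, cW q what j v
        = (q / ((n + 1 : ℕ) : ℝ)) * (what j (Function.update v j 0))⁻¹ := by
      intro v
      unfold cW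
      rw [div_mul_eq_div_div, div_eq_mul_inv]
    simp only [hval]
    rw [integral_const_mul]
  have hFDPnn : ∀ ω, 0 ≤ ((Ustar (fun j => p j ω) ∩ H0).card : ℝ)
      / max ((Ustar (fun j => p j ω)).card : ℝ) 1 := fun ω =>
    div_nonneg (by positivity) (le_trans zero_le_one (le_max_right _ _))
  rw [integral_eq_lintegral_of_nonneg_ae (Filter.Eventually.of_forall hFDPnn)
    hInt.aestronglyMeasurable]
  refine ENNReal.toReal_le_of_le_ofReal hq.le ?_
  have hgam_aemμ : ∀ j : Fin (n + 1), AEMeasurable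
      (fun ω => ENNReal.ofReal (gamW q what Ustar j (P ω))) μ := by
    intro j
    have h1 := gamW_aemeasurable ν hfin hq hm' hw_pos hw_mono hUanti j
    rw [hmap] at h1
    exact h1.comp_aemeasurable hPmeas.aemeasurable
  have hstep1 : ∫⁻ ω, ENNReal.ofReal (((Ustar (fun j => p j ω) ∩ H0).card : ℝ)
        / max ((Ustar (fun j => p j ω)).card : ℝ) 1) ∂μ
      ≤ ∑ j ∈ H0, ∫⁻ ω, ENNReal.ofReal (gamW q what Ustar j (P ω)) ∂μ := by
    have hple : ∀ ω, ENNReal.ofReal (((Ustar (fun j => p j ω) ∩ H0).card : ℝ)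
          / max ((Ustar (fun j => p j ω)).card : ℝ) 1)
        ≤ ∑ j ∈ H0, ENNReal.ofReal (gamW q what Ustar j (P ω)) := by
      intro ω
      refine le_trans (ENNReal.ofReal_le_ofReal
        (gamW_pointwise hq hm' hw_pos hw_mono hUanti hSC H0 (P ω)
          (fun i => hrange i ω))) ?_
      rw [ENNReal.ofReal_sum_of_nonneg (fun j _ => gamW_nonneg hq hm' hw_pos j (P ω))]
    refine le_trans (lintegral_mono hple)
      (le_of_eq (lintegral_finset_sum' H0 (fun j _ => hgam_aemμ j)))
  have hstep2 : ∀ j ∈ H0, ∫⁻ ω, ENNReal.ofReal (gamW q what Ustar j (P ω)) ∂μ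
      ≤ ENNReal.ofReal ((q / ((n + 1 : ℕ) : ℝ))
          * ∫ ω, (what j (Function.update (fun k => p k ω) j 0))⁻¹ ∂μ) := by
    intro j hj
    have hgampi := gamW_aemeasurable ν hfin hq hm' hw_pos hw_mono hUanti j
    have hgammap : AEMeasurable (fun v => ENNReal.ofReal (gamW q what Ustar j v)) (μ.map P) := by
      rw [← hmap]; exact hgampi
    have h1 : ∫⁻ ω, ENNReal.ofReal (gamW q what Ustar j (P ω)) ∂μ
        = ∫⁻ v, ENNReal.ofReal (gamW q what Ustar j v) ∂(Measure.pi ν) := by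
      rw [hmap]
      exact (lintegral_map' hgammap hPmeas.aemeasurable).symm
    rw [h1]
    refine le_trans (key_bound ν hprob hq hw_pos hw_mono hUanti j (hnullj j hj) hbox) ?_
    rw [hcint_eq j, hIeq j]
  have hInn : ∀ j : Fin (n + 1), 0 ≤ (q / ((n + 1 : ℕ) : ℝ))
      * ∫ ω, (what j (Function.update (fun k => p k ω) j 0))⁻¹ ∂μ := by
    intro j
    refine mul_nonneg (by positivity) (integral_nonneg fun ω => ?_)
    exact inv_nonneg.mpr (hw_pos _ _).le
  calc ∫⁻ ω, ENNReal.ofReal (((Ustar (fun j => p j ω) ∩ H0).card : ℝ)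
        / max ((Ustar (fun j => p j ω)).card : ℝ) 1) ∂μ
      ≤ ∑ j ∈ H0, ∫⁻ ω, ENNReal.ofReal (gamW q what Ustar j (P ω)) ∂μ := hstep1
    _ ≤ ∑ j ∈ H0, ENNReal.ofReal ((q / ((n + 1 : ℕ) : ℝ))
          * ∫ ω, (what j (Function.update (fun k => p k ω) j 0))⁻¹ ∂μ) :=
        Finset.sum_le_sum hstep2
    _ = ENNReal.ofReal (∑ j ∈ H0, (q / ((n + 1 : ℕ) : ℝ))
          * ∫ ω, (what j (Function.update (fun k => p k ω) j 0))⁻¹ ∂μ) :=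
        (ENNReal.ofReal_sum_of_nonneg (fun j _ => hInn j)).symm
    _ ≤ ENNReal.ofReal q := by
        refine ENNReal.ofReal_le_ofReal ?_
        rw [← Finset.mul_sum]
        have hsum_le : ∑ j ∈ H0,
            ∫ ω, (what j (Function.update (fun k => p k ω) j 0))⁻¹ ∂μ ≤ ((n + 1 : ℕ) : ℝ) :=
          hw_cond
        calc (q / ((n + 1 : ℕ) : ℝ)) * ∑ j ∈ H0,
              ∫ ω, (what j (Function.update (fun k => p k ω) j 0))⁻¹ ∂μ
            ≤ (q / ((n + 1 : ℕ) : ℝ)) * ((n + 1 : ℕ) : ℝ) := by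
              refine mul_le_mul_of_nonneg_left hsum_le (by positivity)
          _ = q := by
              rw [div_mul_cancel₀]
              positivity
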